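/- Let β, κ > 0 and α ∈ ℝ, and let ρ : ℝ → ℝ be continuous, 2π-periodic, with ∫_0^{2π} ρ(x) dx = 1. Then ρ is a Kirkwood–Monroe fixed point for the HKB model, i.e. ρ(x) = Z^{−1} exp(−β(α cos(2x) + ∫_0^{2π} (−κ cos(x−y)) ρ(y) dy)) for all x with Z the corresponding normalization constant, if and only if there exists m = (m₁, m₂) ∈ ℝ² such that m₁ = R₁(m), m₂ = R₂(m) (the self-consistency equation m = R(m)) and ρ(x) = ρ_∞(x, m) for all x. Moreover, in that case necessarily m₁ = ∫_0^{2π} cos(y) ρ(y) dy and m₂ = ∫_0^{2π} sin(y) ρ(y) dy. -/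

import Mathlib

open Real MeasureTheory

/-- The HKB normalization constant `Z(m)`. -/
noncomputable def Zhkb (β κ α : ℝ) (m : ℝ × ℝ) : ℝ :=
  ∫ y in (0:ℝ)..(2 * π),
    Real.exp (-β * (α * Real.cos (2 * y) - κ * (m.1 * Real.cos y + m.2 * Real.sin y)))

/-- The HKB candidate stationary density `ρ_∞(x, m)`. -/
noncomputable def rhoInf (β κ α : ℝ) (m : ℝ × ℝ) (x : ℝ) : ℝ :=
  (Zhkb β κ α m)⁻¹ *
    Real.exp (-β * (α * Real.cos (2 * x) - κ * (m.1 * Real.cos x + m.2 * Real.sin x)))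

/-- The HKB self-consistency map `R(m) = (∫ cos·ρ_∞(·,m), ∫ sin·ρ_∞(·,m))`. -/
noncomputable def Rhkb (β κ α : ℝ) (m : ℝ × ℝ) : ℝ × ℝ :=
  (∫ x in (0:ℝ)..(2 * π), Real.cos x * rhoInf β κ α m x,
   ∫ x in (0:ℝ)..(2 * π), Real.sin x * rhoInf β κ α m x)

/-- `ρ` is a Kirkwood–Monroe fixed point for the HKB model with confining potential
`V(x) = α cos(2x)` and interaction kernel `w(x) = −κ cos(x)`. -/
def IsKMhkb (β κ α : ℝ) (ρ : ℝ → ℝ) : Prop :=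
  ∀ x : ℝ, ρ x =
    (∫ y in (0:ℝ)..(2 * π), Real.exp (-β * (α * Real.cos (2 * y)
        + ∫ z in (0:ℝ)..(2 * π), (-κ * Real.cos (y - z)) * ρ z)))⁻¹ *
      Real.exp (-β * (α * Real.cos (2 * x)
        + ∫ y in (0:ℝ)..(2 * π), (-κ * Real.cos (x - y)) * ρ y))

/-- Expansion of the interaction integral using `cos (x - y) = cos x cos y + sin x sin y`. -/
lemma interact_eq (κ : ℝ) (ρ : ℝ → ℝ) (hρ : Continuous ρ) (x : ℝ) :
    (∫ y in (0:ℝ)..(2 * π), (-κ * Real.cos (x - y)) * ρ y)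
      = -κ * ((∫ y in (0:ℝ)..(2 * π), Real.cos y * ρ y) * Real.cos x
            + (∫ y in (0:ℝ)..(2 * π), Real.sin y * ρ y) * Real.sin x) := by
  have h : ∀ y : ℝ, (-κ * Real.cos (x - y)) * ρ y
      = (-κ * Real.cos x) * (Real.cos y * ρ y) + (-κ * Real.sin x) * (Real.sin y * ρ y) := by
    intro y; rw [Real.cos_sub]; ring
  simp_rw [h]
  rw [intervalIntegral.integral_add (f := fun y => (-κ * Real.cos x) * (Real.cos y * ρ y))
      (g := fun y => (-κ * Real.sin x) * (Real.sin y * ρ y))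
      (((continuous_const.mul (Real.continuous_cos.mul hρ))).intervalIntegrable _ _)
      (((continuous_const.mul (Real.continuous_sin.mul hρ))).intervalIntegrable _ _),
    intervalIntegral.integral_const_mul, intervalIntegral.integral_const_mul]
  ring

/-- A continuous `2π`-periodic probability density `ρ` is a
Kirkwood–Monroe fixed point for the HKB model iff there is an order parameter
`m = (m₁,m₂)` solving the self-consistency equation `m = R(m)` with `ρ = ρ_∞(·,m)`;
moreover in that case `m₁ = ∫ cos·ρ` and `m₂ = ∫ sin·ρ`. -/
theorem stmt8 (β κ α : ℝ) (hβ : 0 < β) (hκ : 0 < κ)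
    (ρ : ℝ → ℝ) (hρ : Continuous ρ) (hρper : Function.Periodic ρ (2 * π))
    (hmass : (∫ x in (0:ℝ)..(2 * π), ρ x) = 1) :
    (IsKMhkb β κ α ρ ↔
      ∃ m : ℝ × ℝ, m = Rhkb β κ α m ∧ ∀ x : ℝ, ρ x = rhoInf β κ α m x) ∧
    (∀ m : ℝ × ℝ, m = Rhkb β κ α m → (∀ x : ℝ, ρ x = rhoInf β κ α m x) →
      m.1 = (∫ y in (0:ℝ)..(2 * π), Real.cos y * ρ y) ∧
      m.2 = (∫ y in (0:ℝ)..(2 * π), Real.sin y * ρ y)) := by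
  -- the key rewriting of the KM expression in terms of the moments of ρ
  have key : ∀ x : ℝ,
      (∫ y in (0:ℝ)..(2 * π), Real.exp (-β * (α * Real.cos (2 * y)
          + ∫ z in (0:ℝ)..(2 * π), (-κ * Real.cos (y - z)) * ρ z)))⁻¹ *
        Real.exp (-β * (α * Real.cos (2 * x)
          + ∫ y in (0:ℝ)..(2 * π), (-κ * Real.cos (x - y)) * ρ y))
      = rhoInf β κ α (∫ y in (0:ℝ)..(2 * π), Real.cos y * ρ y,
          ∫ y in (0:ℝ)..(2 * π), Real.sin y * ρ y) x := by
    intro x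
    set m₁ := ∫ y in (0:ℝ)..(2 * π), Real.cos y * ρ y
    set m₂ := ∫ y in (0:ℝ)..(2 * π), Real.sin y * ρ y
    have hexp : ∀ y : ℝ, (-β * (α * Real.cos (2 * y)
        + ∫ z in (0:ℝ)..(2 * π), (-κ * Real.cos (y - z)) * ρ z))
        = -β * (α * Real.cos (2 * y) - κ * (m₁ * Real.cos y + m₂ * Real.sin y)) := by
      intro y; rw [interact_eq κ ρ hρ y]; ring
    rw [rhoInf, Zhkb]
    simp only [hexp x]
    congr 2
    exact intervalIntegral.integral_congr (fun y _ => by rw [hexp y])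
  constructor
  · constructor
    · intro hKM
      refine ⟨(∫ y in (0:ℝ)..(2 * π), Real.cos y * ρ y,
        ∫ y in (0:ℝ)..(2 * π), Real.sin y * ρ y), ?_, fun x => (hKM x).trans (key x)⟩
      have hρeq : ∀ x : ℝ, ρ x = rhoInf β κ α (∫ y in (0:ℝ)..(2 * π), Real.cos y * ρ y,
          ∫ y in (0:ℝ)..(2 * π), Real.sin y * ρ y) x := fun x => (hKM x).trans (key x)
      rw [Rhkb]
      refine Prod.ext ?_ ?_ <;> simp only <;>
        exact (intervalIntegral.integral_congr (fun y _ => by rw [← hρeq y])).symm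
    · rintro ⟨m, hm, hρeq⟩
      intro x
      have h1 : m.1 = ∫ y in (0:ℝ)..(2 * π), Real.cos y * ρ y := by
        conv_lhs => rw [hm]
        exact intervalIntegral.integral_congr (fun y _ => by rw [hρeq y])
      have h2 : m.2 = ∫ y in (0:ℝ)..(2 * π), Real.sin y * ρ y := by
        conv_lhs => rw [hm]
        exact intervalIntegral.integral_congr (fun y _ => by rw [hρeq y])
      rw [key x, hρeq x]
      have : m = (∫ y in (0:ℝ)..(2 * π), Real.cos y * ρ y,
          ∫ y in (0:ℝ)..(2 * π), Real.sin y * ρ y) := Prod.ext h1 h2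
      rw [← this]
  · intro m hm hρeq
    constructor
    · conv_lhs => rw [hm]
      exact intervalIntegral.integral_congr (fun y _ => by rw [hρeq y])
    · conv_lhs => rw [hm]
      exact intervalIntegral.integral_congr (fun y _ => by rw [hρeq y])
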